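/- Let V be a finite set, Q ⊆ V, and let μ be a real-valued set function on subsets of V with μ(∅) = 0 that is monotone (S ⊆ T implies μ(S) ≤ μ(T)) and submodular (for all S ⊆ T ⊆ V and u ∈ V ∖ T, μ(T ∪ {u}) − μ(T) ≤ μ(S ∪ {u}) − μ(S)). Let s_1, …, s_{t+1} be distinct elements of Q chosen greedily: setting P_0 = ∅ and P_i = {s_1, …, s_i}, assume that for each i = 1, …, t+1 and every u ∈ Q ∖ P_{i−1}, μ(P_{i−1} ∪ {s_i}) ≥ μ(P_{i−1} ∪ {u}). Then the marginal gain of the last element satisfies μ(P_{t+1}) − μ(P_t) ≤ μ(P_{t+1})/(t+1), and equivalently μ(P_t) ≥ (t/(t+1))·μ(P_{t+1}). -/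
import Mathlib


open BigOperators

/-- for a monotone submodular set function `μ` with `μ(∅) = 0` and a
greedily chosen sequence `s_1, …, s_{t+1}` of distinct elements of `Q` with prefixes
`P_i = {s_1, …, s_i}`, the marginal gain of the last element satisfies
`μ(P_{t+1}) − μ(P_t) ≤ μ(P_{t+1})/(t+1)`, equivalently
`μ(P_t) ≥ (t/(t+1))·μ(P_{t+1})`. -/
theorem stmt19
    {α : Type*} [Fintype α] [DecidableEq α]
    (Q : Finset α)
    (μ : Finset α → ℝ)
    (hμ0 : μ ∅ = 0)
    (hmono : ∀ S T : Finset α, S ⊆ T → μ S ≤ μ T)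
    (hsub : ∀ S T : Finset α, ∀ u : α, S ⊆ T → u ∉ T →
      μ (insert u T) - μ T ≤ μ (insert u S) - μ S)
    (t : ℕ) (s : ℕ → α)
    -- `s_1, …, s_{t+1}` are distinct elements of `Q`:
    (hdistinct : Set.InjOn s (Set.Icc 1 (t + 1)))
    (hmem : ∀ i ∈ Finset.Icc 1 (t + 1), s i ∈ Q)
    -- `P_i = {s_1, …, s_i}`:
    (P : ℕ → Finset α) (hP : P = fun i => (Finset.Icc 1 i).image s)
    -- the sequence is chosen greedily:
    (hgreedy : ∀ i ∈ Finset.Icc 1 (t + 1), ∀ u ∈ Q, u ∉ P (i - 1) →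
      μ (insert u (P (i - 1))) ≤ μ (insert (s i) (P (i - 1)))) :
    μ (P (t + 1)) - μ (P t) ≤ μ (P (t + 1)) / (t + 1) ∧
    ((t : ℝ) / (t + 1)) * μ (P (t + 1)) ≤ μ (P t) := by
  subst hP
  -- basic facts about P
  have hP0 : (Finset.Icc 1 0).image s = ∅ := by simp
  have hPsucc : ∀ i : ℕ, (Finset.Icc 1 (i + 1)).image s
      = insert (s (i + 1)) ((Finset.Icc 1 i).image s) := by
    intro i
    have : Finset.Icc 1 (i + 1) = insert (i + 1) (Finset.Icc 1 i) := by
      ext x; simp [Finset.mem_Icc, Nat.lt_succ_iff]; omega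
    rw [this, Finset.image_insert]
  have hPmono : ∀ i j : ℕ, i ≤ j →
      (Finset.Icc 1 i).image s ⊆ (Finset.Icc 1 j).image s :=
    fun i j hij => Finset.image_subset_image (Finset.Icc_subset_Icc_right hij)
  have hnot : ∀ i : ℕ, i ≤ t → s (t + 1) ∉ (Finset.Icc 1 i).image s := by
    intro i hi hmemi
    obtain ⟨j, hj, hje⟩ := Finset.mem_image.mp hmemi
    simp only [Finset.mem_Icc] at hj
    have hj1 : j ∈ Set.Icc 1 (t + 1) := ⟨hj.1, by omega⟩
    have : j = t + 1 := hdistinct hj1 ⟨le_refl 1 |>.trans (by omega), le_refl _⟩ hje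
    omega
  -- key: each earlier gain dominates the last gain
  have key : ∀ j ∈ Finset.range (t + 1),
      μ ((Finset.Icc 1 (t + 1)).image s) - μ ((Finset.Icc 1 t).image s)
        ≤ μ ((Finset.Icc 1 (j + 1)).image s) - μ ((Finset.Icc 1 j).image s) := by
    intro j hj
    rw [Finset.mem_range] at hj
    have hjt : j ≤ t := by omega
    have h1 : μ ((Finset.Icc 1 (t + 1)).image s) - μ ((Finset.Icc 1 t).image s)
        ≤ μ (insert (s (t + 1)) ((Finset.Icc 1 j).image s))
          - μ ((Finset.Icc 1 j).image s) := by
      rw [hPsucc t]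
      exact hsub _ _ _ (hPmono j t hjt) (hnot t le_rfl)
    have h2 : μ (insert (s (t + 1)) ((Finset.Icc 1 j).image s))
        ≤ μ (insert (s (j + 1)) ((Finset.Icc 1 j).image s)) := by
      have hi : j + 1 ∈ Finset.Icc 1 (t + 1) := by simp [Finset.mem_Icc]; omega
      have := hgreedy (j + 1) hi (s (t + 1))
        (hmem (t + 1) (by simp [Finset.mem_Icc])) (by
          simpa using hnot j hjt)
      simpa using this
    rw [hPsucc j]
    linarith
  -- telescoping sum
  have hsum : ∑ j ∈ Finset.range (t + 1),
      (μ ((Finset.Icc 1 (j + 1)).image s) - μ ((Finset.Icc 1 j).image s))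
      = μ ((Finset.Icc 1 (t + 1)).image s) := by
    rw [Finset.sum_range_sub (fun j => μ ((Finset.Icc 1 j).image s))]
    rw [hP0, hμ0, sub_zero]
  have hbound : ((t : ℝ) + 1) *
      (μ ((Finset.Icc 1 (t + 1)).image s) - μ ((Finset.Icc 1 t).image s))
      ≤ μ ((Finset.Icc 1 (t + 1)).image s) := by
    calc ((t : ℝ) + 1) *
        (μ ((Finset.Icc 1 (t + 1)).image s) - μ ((Finset.Icc 1 t).image s))
        = ∑ _j ∈ Finset.range (t + 1),
          (μ ((Finset.Icc 1 (t + 1)).image s) - μ ((Finset.Icc 1 t).image s)) := by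
          rw [Finset.sum_const, Finset.card_range]; push_cast; ring
      _ ≤ ∑ j ∈ Finset.range (t + 1),
          (μ ((Finset.Icc 1 (j + 1)).image s) - μ ((Finset.Icc 1 j).image s)) :=
          Finset.sum_le_sum key
      _ = _ := hsum
  have ht : (0 : ℝ) < (t : ℝ) + 1 := by positivity
  constructor
  · rw [le_div_iff₀ ht]; nlinarith
  · rw [div_mul_eq_mul_div, div_le_iff₀ ht]; nlinarith
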